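/- Let D be a positive integer, n ≥ 1 an integer, λ_s ∈ ℝ, x_s ∈ ℝ^D, and let ε̂ : ℝ → ℝ^D be n-times continuously differentiable on [λ_s, λ_s + 1] with ‖ε̂^{(n)}(u)‖ ≤ M there. Let B, c, c_0, …, c_{n−1} > 0 and l, d_0, …, d_{n−1} > 0. For each h ∈ (0, 1], let α_s, α_t(h), σ_t(h) > 0 satisfy σ_t(h) = α_t(h)·e^{−(λ_s + h)} and α_t(h)/α_s ≤ B; define the exact updated value x_t(h) := (α_t(h)/α_s)·x_s − σ_t(h)·∫_0^h e^{h−u} ε̂(λ_s + u) du and the numerical update x̃_t(h) := (α_t(h)/α_s)·x̃_s(h) − σ_t(h)·Σ_{k=0}^{n−1} (e^h − Σ_{j=0}^{k} h^j/j!) · ẽ_k(h), where the approximations satisfy ‖x̃_s(h) − x_s‖ ≤ c h^l and ‖ẽ_k(h) − ε̂^{(k)}(λ_s)‖ ≤ c_k h^{d_k} for k = 0, …, n−1. Then there exists a constant C such that for all h ∈ (0, 1], ‖x̃_t(h) − x_t(h)‖ ≤ C h^p, where p = min(n + 1, l, min_{0 ≤ k ≤ n−1}(d_k + k + 1)). That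 is, the one-step update converges to h with order min(n+1, l, d_0+1, d_1+2, …, d_{n−1}+n). -/

import Mathlib

lemma sum_hasDerivAt (k : ℕ) (u : ℝ) :
    HasDerivAt (fun u : ℝ => ∑ j ∈ Finset.range (k+1), u ^ j / (j.factorial : ℝ))
      (∑ j ∈ Finset.range k, u ^ j / (j.factorial : ℝ)) u := by
  have h : HasDerivAt (fun u : ℝ => ∑ j ∈ Finset.range (k+1), u ^ j / (j.factorial : ℝ))
      (∑ j ∈ Finset.range (k+1), (j : ℝ) * u ^ (j - 1) / (j.factorial : ℝ)) u :=
    HasDerivAt.fun_sum fun j _ => (hasDerivAt_pow j u).div_const _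
  convert h using 1
  rw [Finset.sum_range_succ' (fun j => (j : ℝ) * u ^ (j-1) / (j.factorial : ℝ)) k]
  simp [Nat.factorial_succ]
  apply Finset.sum_congr rfl
  intro j _
  push_cast
  field_simp

lemma intA (h : ℝ) (k : ℕ) :
    ∫ u in (0:ℝ)..h, Real.exp (h - u) * (u ^ k / (k.factorial : ℝ)) =
      Real.exp h - ∑ j ∈ Finset.range (k+1), h ^ j / (j.factorial : ℝ) := by
  have key : ∀ u : ℝ, HasDerivAt
      (fun u : ℝ => -(Real.exp (h - u) * ∑ j ∈ Finset.range (k+1), u ^ j / (j.factorial : ℝ)))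
      (Real.exp (h - u) * (u ^ k / (k.factorial : ℝ))) u := by
    intro u
    have he : HasDerivAt (fun u : ℝ => Real.exp (h - u)) (-(Real.exp (h - u))) u := by
      have := ((hasDerivAt_const u h).sub (hasDerivAt_id u)).exp
      simpa using this
    have := (he.fun_mul (sum_hasDerivAt k u)).fun_neg
    refine this.congr_deriv ?_
    rw [Finset.sum_range_succ]
    ring
  rw [intervalIntegral.integral_eq_sub_of_hasDerivAt (fun u _ => key u)
    (((Real.continuous_exp.comp (continuous_const.sub continuous_id)).mul
      ((continuous_pow k).div_const _)).intervalIntegrable 0 h)]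
  have : ∑ j ∈ Finset.range (k+1), (0:ℝ) ^ j / (j.factorial : ℝ) = 1 := by
    rw [Finset.sum_range_succ' (fun j => (0:ℝ) ^ j / (j.factorial : ℝ)) k]
    simp
  simp [this]
  ring

private lemma stmt_9_aux (m : ℕ)
    (ls : ℝ) (D : ℕ) (xs : EuclideanSpace ℝ (Fin D))
    (ε : ℝ → EuclideanSpace ℝ (Fin D))
    (hε : ContDiffOn ℝ ((m+1 : ℕ) : ℕ∞) ε (Set.Icc ls (ls + 1)))
    (M : ℝ)
    (hM : ∀ u ∈ Set.Icc ls (ls + 1),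
      ‖iteratedDerivWithin (m+1) ε (Set.Icc ls (ls + 1)) u‖ ≤ M)
    (B c : ℝ) (ck : ℕ → ℝ) (hB : 0 < B) (hc : 0 < c)
    (hck : ∀ k < m+1, 0 < ck k)
    (l : ℝ) (d : ℕ → ℝ) (hl : 0 < l) (hd : ∀ k < m+1, 0 < d k)
    (αs : ℝ) (hαs : 0 < αs)
    (αt σt : ℝ → ℝ)
    (hαt : ∀ h ∈ Set.Ioc (0:ℝ) 1, 0 < αt h)
    (hσt : ∀ h ∈ Set.Ioc (0:ℝ) 1, 0 < σt h)
    (hrel : ∀ h ∈ Set.Ioc (0:ℝ) 1, σt h = αt h * Real.exp (-(ls + h)))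
    (hratio : ∀ h ∈ Set.Ioc (0:ℝ) 1, αt h / αs ≤ B)
    (xt : ℝ → EuclideanSpace ℝ (Fin D))
    (hxt : ∀ h, xt h = (αt h / αs) • xs -
      (σt h) • ∫ u in (0:ℝ)..h, Real.exp (h - u) • ε (ls + u))
    (xts : ℝ → EuclideanSpace ℝ (Fin D))
    (ek : ℕ → ℝ → EuclideanSpace ℝ (Fin D))
    (xtt : ℝ → EuclideanSpace ℝ (Fin D))
    (hxtt : ∀ h, xtt h = (αt h / αs) • xts h -
      (σt h) • ∑ k ∈ Finset.range (m+1),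
        (Real.exp h - ∑ j ∈ Finset.range (k + 1), h ^ j / (j.factorial : ℝ)) • ek k h)
    (hxts : ∀ h ∈ Set.Ioc (0:ℝ) 1, ‖xts h - xs‖ ≤ c * h ^ l)
    (hek : ∀ h ∈ Set.Ioc (0:ℝ) 1, ∀ k < m+1,
      ‖ek k h - iteratedDerivWithin k ε (Set.Icc ls (ls + 1)) ls‖ ≤ ck k * h ^ (d k))
    (p : ℝ) (hp1 : p ≤ (m : ℝ) + 1 + 1) (hp2 : p ≤ l)
    (hp3 : ∀ k < m + 1, p ≤ d k + k + 1) :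
    ∃ C : ℝ, ∀ h ∈ Set.Ioc (0:ℝ) 1, ‖xtt h - xt h‖ ≤ C * h ^ p := by
  have hM0 : 0 ≤ M := le_trans (norm_nonneg _) (hM ls ⟨le_refl _, by linarith⟩)
  set s : Set ℝ := Set.Icc ls (ls + 1) with hs
  set Dk : ℕ → EuclideanSpace ℝ (Fin D) := fun k => iteratedDerivWithin k ε s ls with hDk
  set S : ℝ := B * αs * Real.exp (-ls) with hS
  have hSpos : 0 < S := by positivity
  refine ⟨B * c + S * ((∑ k ∈ Finset.range (m+1), 3 * ck k) + 3 * M / (m.factorial : ℝ)), ?_⟩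
  intro h hh
  obtain ⟨hh0, hh1⟩ := hh
  have hrpow : ∀ a : ℝ, p ≤ a → h ^ a ≤ h ^ p := fun a ha =>
    Real.rpow_le_rpow_of_exponent_ge hh0 hh1 ha
  have hppos : (0:ℝ) < h ^ p := Real.rpow_pos_of_pos hh0 p
  have hmem : ∀ u ∈ Set.Icc (0:ℝ) h, ls + u ∈ s := by
    intro u hu; exact ⟨by linarith [hu.1], by linarith [hu.2]⟩
  -- exp bound
  have hexp3 : ∀ u ∈ Set.Icc (0:ℝ) h, Real.exp (h - u) ≤ 3 := by
    intro u hu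
    calc Real.exp (h - u) ≤ Real.exp 1 := Real.exp_le_exp.mpr (by linarith [hu.1])
      _ ≤ 3 := by linarith [Real.exp_one_lt_d9.le]
  -- Taylor
  have hcd : ContDiffOn ℝ ((m : ℕ∞) + 1) ε s := by exact_mod_cast hε
  have htay : ∀ u ∈ Set.Icc (0:ℝ) h,
      ‖ε (ls + u) - ∑ k ∈ Finset.range (m+1), (u ^ k / (k.factorial : ℝ)) • Dk k‖ ≤
        M * h ^ (m+1) / (m.factorial : ℝ) := by
    intro u hu
    have hx : ls + u ∈ s := hmem u hu
    have := taylor_mean_remainder_bound (n := m) (by linarith : ls ≤ ls + 1) hcd hx hM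
    rw [taylor_within_apply] at this
    simp only [add_sub_cancel_left, inv_mul_eq_div] at this
    refine le_trans this ?_
    gcongr <;> first | exact hM0 | exact hu.1 | exact hu.2
  -- coefficient
  set coef : ℕ → ℝ := fun k =>
    Real.exp h - ∑ j ∈ Finset.range (k + 1), h ^ j / (j.factorial : ℝ) with hcoef
  have hcoefB : ∀ k, |coef k| ≤ 3 * h ^ (k+1) := by
    intro k
    have : coef k = ∫ u in (0:ℝ)..h, Real.exp (h - u) * (u ^ k / (k.factorial : ℝ)) :=
      (intA h k).symm
    rw [this, ← Real.norm_eq_abs]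
    have hb := intervalIntegral.norm_integral_le_of_norm_le_const
      (C := 3 * h ^ k) (a := (0:ℝ)) (b := h)
      (f := fun u => Real.exp (h - u) * (u ^ k / (k.factorial : ℝ))) ?_
    · calc ‖∫ u in (0:ℝ)..h, Real.exp (h - u) * (u ^ k / (k.factorial : ℝ))‖
          ≤ 3 * h ^ k * |h - 0| := hb
        _ = 3 * h ^ (k+1) := by
            rw [sub_zero, abs_of_pos hh0, pow_succ]; ring
    · intro u hu
      rw [Set.uIoc_of_le hh0.le] at hu
      have hu' : u ∈ Set.Icc (0:ℝ) h := ⟨hu.1.le, hu.2⟩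
      rw [Real.norm_eq_abs, abs_mul, abs_of_pos (Real.exp_pos _),
        abs_of_nonneg (div_nonneg (pow_nonneg hu'.1 _) (Nat.cast_nonneg _))]
      have h1 : u ^ k / (k.factorial : ℝ) ≤ h ^ k := by
        have hle : u ^ k ≤ h ^ k := pow_le_pow_left₀ hu'.1 hu'.2 _
        have hfac : (1:ℝ) ≤ (k.factorial : ℝ) := by exact_mod_cast k.factorial_pos
        calc u ^ k / (k.factorial : ℝ) ≤ u ^ k / 1 :=
              div_le_div_of_nonneg_left (pow_nonneg hu'.1 _) one_pos hfac
          _ = u ^ k := div_one _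
          _ ≤ h ^ k := hle
      have := mul_le_mul (hexp3 u hu') h1
        (div_nonneg (pow_nonneg hu'.1 _) (Nat.cast_nonneg _)) (by norm_num)
      linarith
  -- integrability
  have hεc : ContinuousOn (fun u : ℝ => ε (ls + u)) (Set.Icc 0 h) :=
    (hε.continuousOn).comp (by fun_prop) hmem
  have hf_int : IntervalIntegrable (fun u => Real.exp (h - u) • ε (ls + u))
      MeasureTheory.volume 0 h := by
    apply ContinuousOn.intervalIntegrable
    rw [Set.uIcc_of_le hh0.le]
    exact ((Real.continuous_exp.comp (continuous_const.sub continuous_id)).continuousOn).smul hεc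
  have hg_int : IntervalIntegrable
      (fun u => ∑ k ∈ Finset.range (m+1), (Real.exp (h - u) * (u ^ k / (k.factorial : ℝ))) • Dk k)
      MeasureTheory.volume 0 h := by
    apply Continuous.intervalIntegrable
    fun_prop
  -- ∫ g = Σ coef • Dk
  have hintg : (∫ u in (0:ℝ)..h,
        ∑ k ∈ Finset.range (m+1), (Real.exp (h - u) * (u ^ k / (k.factorial : ℝ))) • Dk k) =
      ∑ k ∈ Finset.range (m+1), coef k • Dk k := by
    rw [intervalIntegral.integral_finset_sum]
    · refine Finset.sum_congr rfl fun k _ => ?_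
      rw [intervalIntegral.integral_smul_const, intA]
    · intro k _
      apply Continuous.intervalIntegrable
      fun_prop
  -- remainder
  have hsplit : (∫ u in (0:ℝ)..h, Real.exp (h - u) • ε (ls + u)) -
      ∑ k ∈ Finset.range (m+1), coef k • Dk k =
      ∫ u in (0:ℝ)..h, Real.exp (h - u) •
        (ε (ls + u) - ∑ k ∈ Finset.range (m+1), (u ^ k / (k.factorial : ℝ)) • Dk k) := by
    rw [← hintg, ← intervalIntegral.integral_sub hf_int hg_int]
    congr 1
    funext u
    rw [smul_sub, Finset.smul_sum]
    congr 1
    exact Finset.sum_congr rfl fun k _ => (smul_smul _ _ _).symm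
  have hR : ‖(∫ u in (0:ℝ)..h, Real.exp (h - u) • ε (ls + u)) -
      ∑ k ∈ Finset.range (m+1), coef k • Dk k‖ ≤
      3 * (M * h ^ (m+1) / (m.factorial : ℝ)) * h := by
    rw [hsplit]
    have hb := intervalIntegral.norm_integral_le_of_norm_le_const
      (C := 3 * (M * h ^ (m+1) / (m.factorial : ℝ))) (a := (0:ℝ)) (b := h)
      (f := fun u => Real.exp (h - u) •
        (ε (ls + u) - ∑ k ∈ Finset.range (m+1), (u ^ k / (k.factorial : ℝ)) • Dk k)) ?_
    · simpa [abs_of_pos hh0] using hb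
    · intro u hu
      rw [Set.uIoc_of_le hh0.le] at hu
      have hu' : u ∈ Set.Icc (0:ℝ) h := ⟨hu.1.le, hu.2⟩
      rw [norm_smul, Real.norm_eq_abs, abs_of_pos (Real.exp_pos _)]
      exact mul_le_mul (hexp3 u hu') (htay u hu') (norm_nonneg _) (by norm_num)
  -- decomposition
  have hdecomp : xtt h - xt h = (αt h / αs) • (xts h - xs)
      - σt h • (∑ k ∈ Finset.range (m+1), coef k • (ek k h - Dk k))
      + σt h • ((∫ u in (0:ℝ)..h, Real.exp (h - u) • ε (ls + u)) -
          ∑ k ∈ Finset.range (m+1), coef k • Dk k) := by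
    rw [hxt h, hxtt h]
    have hsum : ∑ k ∈ Finset.range (m+1), coef k • (ek k h - Dk k) =
        (∑ k ∈ Finset.range (m+1), coef k • ek k h) -
        ∑ k ∈ Finset.range (m+1), coef k • Dk k := by
      rw [← Finset.sum_sub_distrib]
      exact Finset.sum_congr rfl fun k _ => smul_sub _ _ _
    rw [hsum]
    module
  -- bounds on pieces
  have hhin : h ∈ Set.Ioc (0:ℝ) 1 := ⟨hh0, hh1⟩
  have hα : 0 ≤ αt h / αs := le_of_lt (div_pos (hαt h hhin) hαs)
  have hσle : σt h ≤ S := by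
    rw [hrel h hhin, hS]
    have h1 : αt h ≤ B * αs := by
      have := hratio h hhin
      rw [div_le_iff₀ hαs] at this
      exact this
    have h2 : Real.exp (-(ls + h)) ≤ Real.exp (-ls) :=
      Real.exp_le_exp.mpr (by linarith)
    calc αt h * Real.exp (-(ls + h)) ≤ (B * αs) * Real.exp (-ls) :=
      mul_le_mul h1 h2 (Real.exp_pos _).le (by positivity)
    _ = S := by rw [hS]
  have hσ0 : 0 ≤ σt h := (hσt h hhin).le
  have hT1 : ‖(αt h / αs) • (xts h - xs)‖ ≤ B * c * h ^ p := by
    rw [norm_smul, Real.norm_eq_abs, abs_of_nonneg hα]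
    calc (αt h / αs) * ‖xts h - xs‖ ≤ B * (c * h ^ l) :=
        mul_le_mul (hratio h hhin) (hxts h hhin) (norm_nonneg _) hB.le
      _ ≤ B * (c * h ^ p) :=
          mul_le_mul_of_nonneg_left (mul_le_mul_of_nonneg_left (hrpow l hp2) hc.le) hB.le
      _ = B * c * h ^ p := by ring
  have hT2 : ‖σt h • (∑ k ∈ Finset.range (m+1), coef k • (ek k h - Dk k))‖ ≤
      S * (∑ k ∈ Finset.range (m+1), 3 * ck k) * h ^ p := by
    rw [norm_smul, Real.norm_eq_abs, abs_of_nonneg hσ0]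
    have hterm : ∀ k ∈ Finset.range (m+1),
        ‖coef k • (ek k h - Dk k)‖ ≤ (3 * ck k) * h ^ p := by
      intro k hk
      rw [Finset.mem_range] at hk
      rw [norm_smul, Real.norm_eq_abs]
      have h1 : |coef k| * ‖ek k h - Dk k‖ ≤ (3 * h ^ (k+1)) * (ck k * h ^ (d k)) :=
        mul_le_mul (hcoefB k) (hek h hhin k hk) (norm_nonneg _) (by positivity)
      refine h1.trans ?_
      have h2 : (h:ℝ) ^ (k+1) * h ^ (d k) = h ^ (((k:ℝ) + 1) + d k) := by
        rw [Real.rpow_add hh0, show ((k:ℝ)+1) = ((k+1 : ℕ) : ℝ) by push_cast; ring,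
          Real.rpow_natCast]
      have h3 : h ^ (((k:ℝ) + 1) + d k) ≤ h ^ p := hrpow _ (by
        have := hp3 k hk; linarith)
      calc (3 * h ^ (k+1)) * (ck k * h ^ (d k)) = (3 * ck k) * (h ^ (k+1) * h ^ (d k)) := by ring
        _ = (3 * ck k) * h ^ (((k:ℝ) + 1) + d k) := by rw [h2]
        _ ≤ (3 * ck k) * h ^ p := by
            apply mul_le_mul_of_nonneg_left h3
            have := hck k hk; positivity
    have hsum : ‖∑ k ∈ Finset.range (m+1), coef k • (ek k h - Dk k)‖ ≤
        ∑ k ∈ Finset.range (m+1), (3 * ck k) * h ^ p :=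
      (norm_sum_le _ _).trans (Finset.sum_le_sum hterm)
    rw [← Finset.sum_mul] at hsum
    calc σt h * ‖∑ k ∈ Finset.range (m+1), coef k • (ek k h - Dk k)‖ ≤
        S * ((∑ k ∈ Finset.range (m+1), 3 * ck k) * h ^ p) :=
        mul_le_mul hσle hsum (norm_nonneg _) hSpos.le
      _ = S * (∑ k ∈ Finset.range (m+1), 3 * ck k) * h ^ p := by ring
  have hT3 : ‖σt h • ((∫ u in (0:ℝ)..h, Real.exp (h - u) • ε (ls + u)) -
      ∑ k ∈ Finset.range (m+1), coef k • Dk k)‖ ≤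
      S * (3 * M / (m.factorial : ℝ)) * h ^ p := by
    rw [norm_smul, Real.norm_eq_abs, abs_of_nonneg hσ0]
    have h1 : σt h * ‖(∫ u in (0:ℝ)..h, Real.exp (h - u) • ε (ls + u)) -
        ∑ k ∈ Finset.range (m+1), coef k • Dk k‖ ≤
        S * (3 * (M * h ^ (m+1) / (m.factorial : ℝ)) * h) :=
      mul_le_mul hσle hR (norm_nonneg _) hSpos.le
    refine h1.trans ?_
    have h2 : (h:ℝ) ^ (m+1) * h = h ^ (((m:ℝ) + 1) + 1) := by
      rw [Real.rpow_add hh0, show ((m:ℝ)+1) = ((m+1 : ℕ) : ℝ) by push_cast; ring,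
        Real.rpow_natCast, Real.rpow_one]
    have h3 : h ^ (((m:ℝ) + 1) + 1) ≤ h ^ p := hrpow _ hp1
    have hfac : (0:ℝ) < (m.factorial : ℝ) := by positivity
    calc S * (3 * (M * h ^ (m+1) / (m.factorial : ℝ)) * h)
        = S * (3 * M / (m.factorial : ℝ)) * (h ^ (m+1) * h) := by ring
      _ = S * (3 * M / (m.factorial : ℝ)) * h ^ (((m:ℝ) + 1) + 1) := by rw [h2]
      _ ≤ S * (3 * M / (m.factorial : ℝ)) * h ^ p := by
          apply mul_le_mul_of_nonneg_left h3
          positivity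
  calc ‖xtt h - xt h‖ = ‖(αt h / αs) • (xts h - xs)
      - σt h • (∑ k ∈ Finset.range (m+1), coef k • (ek k h - Dk k))
      + σt h • ((∫ u in (0:ℝ)..h, Real.exp (h - u) • ε (ls + u)) -
          ∑ k ∈ Finset.range (m+1), coef k • Dk k)‖ := by rw [hdecomp]
    _ ≤ ‖(αt h / αs) • (xts h - xs)
      - σt h • (∑ k ∈ Finset.range (m+1), coef k • (ek k h - Dk k))‖ +
        ‖σt h • ((∫ u in (0:ℝ)..h, Real.exp (h - u) • ε (ls + u)) -
          ∑ k ∈ Finset.range (m+1), coef k • Dk k)‖ := norm_add_le _ _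
    _ ≤ (‖(αt h / αs) • (xts h - xs)‖ +
        ‖σt h • (∑ k ∈ Finset.range (m+1), coef k • (ek k h - Dk k))‖) +
        ‖σt h • ((∫ u in (0:ℝ)..h, Real.exp (h - u) • ε (ls + u)) -
          ∑ k ∈ Finset.range (m+1), coef k • Dk k)‖ := by
        gcongr
        exact norm_sub_le _ _
    _ ≤ (B * c * h ^ p + S * (∑ k ∈ Finset.range (m+1), 3 * ck k) * h ^ p) +
        S * (3 * M / (m.factorial : ℝ)) * h ^ p := by
        gcongr
    _ = (B * c + S * ((∑ k ∈ Finset.range (m+1), 3 * ck k) + 3 * M / (m.factorial : ℝ)))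
        * h ^ p := by ring

/-- Convergence order of the one-step update of the unified sampling
framework (noise prediction): the numerical update converges to the exact
update with order `min(n+1, l, min_k (d_k + k + 1))` in the step size `h`. -/
theorem stmt_9 (D n : ℕ) (hD : 0 < D) (hn : 1 ≤ n)
    (ls : ℝ) (xs : EuclideanSpace ℝ (Fin D))
    (ε : ℝ → EuclideanSpace ℝ (Fin D))
    (hε : ContDiffOn ℝ (n : ℕ) ε (Set.Icc ls (ls + 1)))
    (M : ℝ)
    (hM : ∀ u ∈ Set.Icc ls (ls + 1),
      ‖iteratedDerivWithin n ε (Set.Icc ls (ls + 1)) u‖ ≤ M)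
    (B c : ℝ) (ck : ℕ → ℝ) (hB : 0 < B) (hc : 0 < c)
    (hck : ∀ k < n, 0 < ck k)
    (l : ℝ) (d : ℕ → ℝ) (hl : 0 < l) (hd : ∀ k < n, 0 < d k)
    (αs : ℝ) (hαs : 0 < αs)
    (αt σt : ℝ → ℝ)
    (hαt : ∀ h ∈ Set.Ioc (0:ℝ) 1, 0 < αt h)
    (hσt : ∀ h ∈ Set.Ioc (0:ℝ) 1, 0 < σt h)
    (hrel : ∀ h ∈ Set.Ioc (0:ℝ) 1, σt h = αt h * Real.exp (-(ls + h)))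
    (hratio : ∀ h ∈ Set.Ioc (0:ℝ) 1, αt h / αs ≤ B)
    (xt : ℝ → EuclideanSpace ℝ (Fin D))
    (hxt : ∀ h, xt h = (αt h / αs) • xs -
      (σt h) • ∫ u in (0:ℝ)..h, Real.exp (h - u) • ε (ls + u))
    (xts : ℝ → EuclideanSpace ℝ (Fin D))
    (ek : ℕ → ℝ → EuclideanSpace ℝ (Fin D))
    (xtt : ℝ → EuclideanSpace ℝ (Fin D))
    (hxtt : ∀ h, xtt h = (αt h / αs) • xts h -
      (σt h) • ∑ k ∈ Finset.range n,
        (Real.exp h - ∑ j ∈ Finset.range (k + 1), h ^ j / (j.factorial : ℝ)) • ek k h)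
    (hxts : ∀ h ∈ Set.Ioc (0:ℝ) 1, ‖xts h - xs‖ ≤ c * h ^ l)
    (hek : ∀ h ∈ Set.Ioc (0:ℝ) 1, ∀ k < n,
      ‖ek k h - iteratedDerivWithin k ε (Set.Icc ls (ls + 1)) ls‖ ≤ ck k * h ^ (d k)) :
    ∃ C : ℝ, ∀ h ∈ Set.Ioc (0:ℝ) 1,
      ‖xtt h - xt h‖ ≤ C * h ^
        (min ((n : ℝ) + 1) (min l
          ((Finset.range n).inf' (Finset.nonempty_range_iff.mpr (by omega))
            fun k => d k + (k : ℝ) + 1))) := by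
  obtain ⟨m, rfl⟩ : ∃ m, n = m + 1 := ⟨n - 1, by omega⟩
  refine stmt_9_aux m ls D xs ε hε M hM B c ck hB hc hck l d hl hd αs hαs αt σt hαt hσt
    hrel hratio xt hxt xts ek xtt hxtt hxts hek _ ?_ ?_ ?_
  · refine le_trans (min_le_left _ _) ?_
    push_cast
    exact le_refl _
  · exact le_trans (min_le_right _ _) (min_le_left _ _)
  · intro k hk
    exact le_trans (min_le_right _ _) (le_trans (min_le_right _ _)
      (Finset.inf'_le _ (Finset.mem_range.mpr hk)))
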